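/- Let A be an Arens–Michael algebra. The following conditions are equivalent: (i) A has a right locally bounded approximate identity; (ii) for every (possibly non-unital) complex Banach algebra B such that there exists a continuous algebra homomorphism φ : A → B with dense range, the algebra B has a right bounded approximate identity, i.e., a net (e_α) in B with sup_α ‖e_α‖ < ∞ and ‖b·e_α − b‖ → 0 for every b ∈ B. -/

import Mathlib

open Filter Topology Bornology Set Pointwise

universe u

section Aux

variable {A : Type u} [NonUnitalRing A] [Module ℂ A]

/-- Type synonym: `A` with the topology of a single submultiplicative seminorm. -/
def SemAlgAux (_q : Seminorm ℂ A) (_hq : ∀ a b : A, _q (a * b) ≤ _q a * _q b) : Type u := A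

namespace SemAlgAux

variable (q : Seminorm ℂ A) (hq : ∀ a b : A, q (a * b) ≤ q a * q b)

instance : NonUnitalRing (SemAlgAux q hq) := ‹NonUnitalRing A›
instance : Module ℂ (SemAlgAux q hq) := ‹Module ℂ A›

instance : NonUnitalSeminormedRing (SemAlgAux q hq) :=
  { (inferInstance : NonUnitalRing (SemAlgAux q hq)),
    AddGroupSeminorm.toSeminormedAddCommGroup (q.toAddGroupSeminorm) with
    norm_mul_le := hq }

instance : NormedSpace ℂ (SemAlgAux q hq) where
  norm_smul_le c x := by
    change q (c • x) ≤ ‖c‖ * q x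
    exact (map_smul_eq_mul q c (x : A)).le

/-- The identity as a linear map from `A` to the synonym. -/
def toSemAlg : A →ₗ[ℂ] SemAlgAux q hq where
  toFun a := a
  map_add' _ _ := rfl
  map_smul' _ _ := rfl

/-- The canonical map from `A` to the separation quotient of the synonym. -/
def toQuot : A →ₙₐ[ℂ] SeparationQuotient (SemAlgAux q hq) where
  toFun a := SeparationQuotient.mk (show SemAlgAux q hq from a)
  map_smul' _ _ := rfl
  map_zero' := rfl
  map_add' _ _ := rfl
  map_mul' _ _ := rfl

theorem norm_toQuot (a : A) : ‖toQuot q hq a‖ = q a := rfl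

theorem surjective_toQuot : Function.Surjective (toQuot q hq) := fun b => by
  obtain ⟨x, hx⟩ := SeparationQuotient.surjective_mk (X := SemAlgAux q hq) b
  exact ⟨x, hx⟩

theorem continuous_toQuot {ι : Type*} [Nonempty ι] [TopologicalSpace A]
    (p : SeminormFamily ℂ A ι) (hp : WithSeminorms p) (k : ι) (hk : ∀ a, q a ≤ p k a) :
    Continuous (toQuot q hq) := by
  have hg : Continuous (toSemAlg q hq) := by
    refine Seminorm.cont_withSeminorms_normedSpace (SemAlgAux q hq) hp (toSemAlg q hq)
      ⟨{k}, 1, ?_⟩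
    intro a
    simp [toSemAlg]
    exact hk a
  exact SeparationQuotient.continuous_mk.comp hg

end SemAlgAux

/-- Directedness for finite sets of indices. -/
theorem exists_fin_dominating {ι : Type*} [Nonempty ι] (p : SeminormFamily ℂ A ι)
    (hdir : ∀ i j : ι, ∃ k, ∀ a : A, p i a ≤ p k a ∧ p j a ≤ p k a) (s : Finset ι) :
    ∃ k, ∀ i ∈ s, ∀ a : A, p i a ≤ p k a := by
  classical
  induction s using Finset.induction_on with
  | empty => exact ⟨Classical.arbitrary ι, by simp⟩
  | @insert i s _ ih =>
    obtain ⟨k, hk⟩ := ih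
    obtain ⟨k', hk'⟩ := hdir i k
    refine ⟨k', fun j hj a => ?_⟩
    rcases Finset.mem_insert.mp hj with rfl | hj
    · exact (hk' a).1
    · exact (hk j hj a).trans (hk' a).2

end Aux

/-- An Arens–Michael algebra `A` has a right locally bounded approximate
identity iff every Banach algebra `B` admitting a continuous homomorphism `A → B` with
dense range has a right bounded approximate identity. -/
theorem stmt_7 {A : Type u} [NonUnitalRing A] [Module ℂ A] [UniformSpace A]
    [IsUniformAddGroup A] [ContinuousSMul ℂ A] [CompleteSpace A] [T2Space A]
    {ι : Type u} [Nonempty ι] (p : SeminormFamily ℂ A ι) (hp : WithSeminorms p)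
    (hdir : ∀ i j : ι, ∃ k, ∀ a : A, p i a ≤ p k a ∧ p j a ≤ p k a)
    (hsub : ∀ (i : ι) (a b : A), p i (a * b) ≤ p i a * p i b) :
    (∀ U ∈ 𝓝 (0 : A), ∃ C : ℝ, 0 < C ∧
      ∀ F : Finset A, ∃ b ∈ (C : ℂ) • U, ∀ a ∈ F, a - a * b ∈ U) ↔
    (∀ (B : Type u) (_ : NonUnitalNormedRing B) (_ : NormedSpace ℂ B)
      (φ : A →ₙₐ[ℂ] B), Continuous φ → DenseRange φ →
      ∃ (κ : Type u) (_ : Preorder κ) (_ : IsDirected κ (· ≤ ·)) (_ : Nonempty κ)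
        (e : κ → B) (M : ℝ), (∀ i, ‖e i‖ ≤ M) ∧
          ∀ b : B, Tendsto (fun i => ‖b * e i - b‖) atTop (𝓝 (0 : ℝ))) := by
  classical
  constructor
  · -- forward direction
    intro hloc B _iB1 _iB2 φ hφc hφd
    have hU : φ ⁻¹' Metric.ball 0 1 ∈ 𝓝 (0 : A) := by
      have h1 : Metric.ball (0 : B) 1 ∈ 𝓝 (φ 0) := by
        rw [map_zero]; exact Metric.ball_mem_nhds _ one_pos
      exact hφc.continuousAt.preimage_mem_nhds h1
    obtain ⟨C, hC, H⟩ := hloc _ hU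
    have hgex : ∀ (x : B) (n : ℕ), ∃ a : A, dist x (φ a) < 1 / ((n : ℝ) + 1) :=
      fun x n => Metric.denseRange_iff.mp hφd x _ (by positivity)
    choose g hg using hgex
    have Hb : ∀ i : Finset B × ULift.{u} ℕ, ∃ b : A,
        b ∈ (C : ℂ) • (φ ⁻¹' Metric.ball 0 1) ∧
        ∀ x ∈ i.1, (i.2.down + 1) • g x i.2.down -
          ((i.2.down + 1) • g x i.2.down) * b ∈ φ ⁻¹' Metric.ball 0 1 := by
      intro i
      obtain ⟨b, hb1, hb2⟩ := H (i.1.image fun x => (i.2.down + 1) • g x i.2.down)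
      exact ⟨b, hb1, fun x hx => hb2 _ (Finset.mem_image_of_mem _ hx)⟩
    choose bb hbb1 hbb2 using Hb
    have hMb : ∀ i, ‖φ (bb i)‖ ≤ C := by
      intro i
      obtain ⟨u, huU, hub⟩ := hbb1 i
      have h2 : φ (bb i) = (C : ℂ) • φ u := by rw [← hub, map_smul]
      have hu1 : ‖φ u‖ < 1 := by simpa [mem_ball_zero_iff] using huU
      have hCn : ‖(C : ℂ)‖ = C := by
        rw [Complex.norm_real, Real.norm_of_nonneg hC.le]
      rw [h2, norm_smul, hCn]
      nlinarith [norm_nonneg (φ u)]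
    refine ⟨Finset B × ULift.{u} ℕ, inferInstance, inferInstance, inferInstance,
      fun i => φ (bb i), C, hMb, ?_⟩
    intro x
    rw [Metric.tendsto_atTop]
    intro ε hε
    obtain ⟨N, hN⟩ := exists_nat_gt ((C + 2) / ε)
    refine ⟨({x}, ULift.up N), fun i hi => ?_⟩
    set n := i.2.down with hn
    have hxF : x ∈ i.1 := hi.1 (Finset.mem_singleton_self x)
    have hnN : N ≤ n := hi.2
    have key := hbb2 i x hxF
    set a' := g x n with ha'
    have h1 : ‖φ ((n + 1) • a' - ((n + 1) • a') * bb i)‖ < 1 := by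
      simpa [mem_ball_zero_iff] using key
    have h2 : φ ((n + 1) • a' - ((n + 1) • a') * bb i)
        = (((n + 1 : ℕ)) : ℂ) • (φ a' - φ a' * φ (bb i)) := by
      rw [map_sub, map_mul, map_nsmul, smul_mul_assoc]
      simp only [← Nat.cast_smul_eq_nsmul (R := ℂ)]
      rw [← smul_sub]
    have hcn : ‖(((n + 1 : ℕ)) : ℂ)‖ = (n : ℝ) + 1 := by
      rw [RCLike.norm_natCast]
      push_cast
      ring
    have hpos : (0 : ℝ) < (n : ℝ) + 1 := by positivity
    have h3 : ‖φ a' - φ a' * φ (bb i)‖ < 1 / ((n : ℝ) + 1) := by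
      rw [h2, norm_smul, hcn] at h1
      rw [lt_div_iff₀ hpos]
      nlinarith
    have h4 : ‖x - φ a'‖ < 1 / ((n : ℝ) + 1) := by
      rw [← dist_eq_norm]; exact hg x n
    have decomp : x * φ (bb i) - x
        = (x - φ a') * φ (bb i) + (φ a' * φ (bb i) - φ a') + (φ a' - x) := by
      noncomm_ring
    have hbound : ‖x * φ (bb i) - x‖ ≤ (C + 2) / ((n : ℝ) + 1) := by
      rw [decomp]
      have e1 : ‖(x - φ a') * φ (bb i)‖ ≤ (1 / ((n : ℝ) + 1)) * C := by
        calc ‖(x - φ a') * φ (bb i)‖ ≤ ‖x - φ a'‖ * ‖φ (bb i)‖ := norm_mul_le _ _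
        _ ≤ (1 / ((n : ℝ) + 1)) * C :=
          mul_le_mul h4.le (hMb i) (norm_nonneg _) (by positivity)
      have e3 : ‖φ a' - x‖ < 1 / ((n : ℝ) + 1) := by rw [norm_sub_rev]; exact h4
      calc ‖(x - φ a') * φ (bb i) + (φ a' * φ (bb i) - φ a') + (φ a' - x)‖
          ≤ ‖(x - φ a') * φ (bb i)‖ + ‖φ a' * φ (bb i) - φ a'‖ + ‖φ a' - x‖ :=
            norm_add₃_le
        _ ≤ (1 / ((n : ℝ) + 1)) * C + 1 / ((n : ℝ) + 1) + 1 / ((n : ℝ) + 1) := by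
            have h3' : ‖φ a' * φ (bb i) - φ a'‖ < 1 / ((n : ℝ) + 1) := by
              rw [norm_sub_rev]; exact h3
            have := h3'.le; have := e3.le; linarith
        _ = (C + 2) / ((n : ℝ) + 1) := by field_simp; ring
    have hfin : (C + 2) / ((n : ℝ) + 1) < ε := by
      rw [div_lt_iff₀ hpos]
      have hNn : (N : ℝ) ≤ (n : ℝ) := Nat.cast_le.mpr hnN
      have : (C + 2) < ε * N := by
        rw [div_lt_iff₀ hε] at hN
        linarith
      nlinarith
    rw [Real.dist_0_eq_abs, abs_of_nonneg (norm_nonneg _)]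
    exact lt_of_le_of_lt hbound hfin
  · -- reverse direction
    intro hB U hU
    obtain ⟨s, ε, hε, hsU⟩ := (hp.mem_nhds_iff 0 U).mp hU
    obtain ⟨k, hk⟩ := exists_fin_dominating p hdir s
    have hball : (p k).ball 0 ε ⊆ U := by
      intro a ha
      apply hsU
      rw [Seminorm.mem_ball_zero] at ha ⊢
      exact lt_of_le_of_lt
        (Seminorm.finset_sup_apply_le (apply_nonneg _ _) (fun i hi => hk i hi a)) ha
    obtain ⟨κ, _, _, _, e, M, hM, htd⟩ := hB (SeparationQuotient (SemAlgAux (p k) (hsub k)))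
      inferInstance inferInstance (SemAlgAux.toQuot (p k) (hsub k))
      (SemAlgAux.continuous_toQuot (p k) (hsub k) p hp k (fun _ => le_rfl))
      (SemAlgAux.surjective_toQuot (p k) (hsub k)).denseRange
    have hM0 : 0 ≤ M := le_trans (norm_nonneg _) (hM (Classical.arbitrary κ))
    have hCpos : (0 : ℝ) < (M + 1) / ε := by positivity
    refine ⟨(M + 1) / ε, hCpos, ?_⟩
    intro F
    have hNeBot : (atTop : Filter κ).NeBot := atTop_neBot_iff.mpr ⟨‹_›, ‹_›⟩
    have hev : ∀ᶠ i in (atTop : Filter κ), ∀ a ∈ F,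
        ‖SemAlgAux.toQuot (p k) (hsub k) a * e i - SemAlgAux.toQuot (p k) (hsub k) a‖ < ε :=
      (eventually_all_finset F).mpr fun a _ => (htd _).eventually (gt_mem_nhds hε)
    obtain ⟨i, hi⟩ := hev.exists
    obtain ⟨b0, hb0⟩ := SemAlgAux.surjective_toQuot (p k) (hsub k) (e i)
    have hqb : p k b0 ≤ M := by
      rw [← SemAlgAux.norm_toQuot (p k) (hsub k) b0, hb0]
      exact hM i
    refine ⟨b0, ?_, ?_⟩
    · have hc0 : ((((M + 1) / ε : ℝ)) : ℂ) ≠ 0 :=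
        Complex.ofReal_ne_zero.mpr (ne_of_gt hCpos)
      have hmem : ((((M + 1) / ε : ℝ)) : ℂ)⁻¹ • b0 ∈ (p k).ball 0 ε := by
        rw [Seminorm.mem_ball_zero, map_smul_eq_mul]
        have hninv : ‖((((M + 1) / ε : ℝ)) : ℂ)⁻¹‖ = ε / (M + 1) := by
          rw [norm_inv, Complex.norm_real, Real.norm_of_nonneg hCpos.le, inv_div]
        rw [hninv]
        have h1 : ε / (M + 1) * p k b0 ≤ ε / (M + 1) * M :=
          mul_le_mul_of_nonneg_left hqb (by positivity)
        have h2 : ε / (M + 1) * M < ε := by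
          rw [div_mul_eq_mul_div, div_lt_iff₀ (by positivity : (0:ℝ) < M + 1)]
          nlinarith
        exact lt_of_le_of_lt h1 h2
      have := smul_mem_smul_set (a := ((((M + 1) / ε : ℝ)) : ℂ)) (hball hmem)
      rwa [smul_inv_smul₀ hc0] at this
    · intro a haF
      apply hball
      rw [Seminorm.mem_ball_zero]
      have h1 := hi a haF
      rw [← hb0, ← map_mul, ← map_sub, SemAlgAux.norm_toQuot] at h1
      rwa [← map_neg_eq_map, neg_sub] at h1
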